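/- Let x = ∑_{k=1}^s c_k a(f_k, φ_k) with c_k > 0, where [a(f,φ)]_j = e^{i(2πfj+φ)}. Set u = ∑_k c_k a(f_k, 0) and t = ∑_k c_k. Then Toep(u) = ∑_k c_k a(f_k,φ_k) a(f_k,φ_k)*, and the block matrix [[Toep(u), x],[x*, t]] is positive semidefinite with trace(Toep(u))/n = t. -/

import Mathlib

open Complex Matrix
open scoped ComplexOrder

/-- The atom `a(f, φ)` with entries `e^{i(2πfj + φ)}`, `j = 0, ..., n-1`. -/
noncomputable def atom (n : ℕ) (f φ : ℝ) : Fin n → ℂ :=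
  fun j => Complex.exp (Complex.I * (2 * Real.pi * f * j + φ))

/-- The Hermitian Toeplitz matrix with first column `u`. -/
noncomputable def Toep (n : ℕ) (u : Fin n → ℂ) : Matrix (Fin n) (Fin n) ℂ :=
  fun j k =>
    if (k : ℕ) ≤ (j : ℕ) then u ⟨(j : ℕ) - k, Nat.lt_of_le_of_lt (Nat.sub_le _ _) j.isLt⟩
    else star (u ⟨(k : ℕ) - j, Nat.lt_of_le_of_lt (Nat.sub_le _ _) k.isLt⟩)

/-- The block matrix `[[Toep(u), x], [x*, t]]`. -/
noncomputable def blockMat (n : ℕ) (u x : Fin n → ℂ) (t : ℝ) :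
    Matrix (Fin n ⊕ Fin 1) (Fin n ⊕ Fin 1) ℂ :=
  Matrix.fromBlocks (Toep n u) (fun j _ => x j) (fun _ k => star (x k)) (fun _ _ => (t : ℂ))

lemma atom_eq (n : ℕ) (f φ : ℝ) (j : Fin n) :
    atom n f φ j = Complex.exp (Complex.I * ((2 * Real.pi * f * (j : ℝ) + φ : ℝ) : ℂ)) := by
  simp [atom]

lemma star_atom (n : ℕ) (f φ : ℝ) (j : Fin n) :
    star (atom n f φ j) = Complex.exp (-(Complex.I * ((2 * Real.pi * f * (j : ℝ) + φ : ℝ) : ℂ))) := by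
  rw [atom_eq, Complex.star_def, ← Complex.exp_conj, _root_.map_mul, Complex.conj_I,
    Complex.conj_ofReal]
  ring_nf

lemma atom_mul_star (n : ℕ) (f φ : ℝ) (j k : Fin n) :
    atom n f φ j * star (atom n f φ k)
      = Complex.exp (Complex.I * ((2 * Real.pi * f * ((j : ℝ) - (k : ℝ)) : ℝ) : ℂ)) := by
  rw [atom_eq, star_atom, ← Complex.exp_add]
  congr 1
  push_cast
  ring

lemma psd_vmv {m : Type*} [Fintype m] (v : m → ℂ) : (vecMulVec v (star v)).PosSemidef := by
  rw [vecMulVec_eq Unit, ← conjTranspose_replicateCol]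
  exact posSemidef_self_mul_conjTranspose _

lemma psd_smul {m : Type*} [Fintype m] {M : Matrix m m ℂ} (hM : M.PosSemidef) {c : ℝ}
    (hc : 0 ≤ c) : ((c : ℂ) • M).PosSemidef := by
  refine ⟨?_, fun y => ?_⟩
  · unfold Matrix.IsHermitian
    rw [conjTranspose_smul]
    simp [Complex.star_def, Complex.conj_ofReal, hM.1.eq]
  · exact (hM.smul (Complex.zero_le_real.2 hc)).2 y

theorem feasibility_of_atomic_decomposition (n s : ℕ) (hn : 0 < n)
    (c : Fin s → ℝ) (f φ : Fin s → ℝ)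
    (hc : ∀ k, 0 < c k) (hf : ∀ k, f k ∈ Set.Ico (0 : ℝ) 1)
    (hφ : ∀ k, φ k ∈ Set.Ico (0 : ℝ) (2 * Real.pi))
    (x u : Fin n → ℂ) (t : ℝ)
    (hx : x = ∑ k, (c k : ℂ) • atom n (f k) (φ k))
    (hu : u = ∑ k, (c k : ℂ) • atom n (f k) 0)
    (ht : t = ∑ k, c k) :
    Toep n u = ∑ k, (c k : ℂ) •
        Matrix.vecMulVec (atom n (f k) (φ k)) (star (atom n (f k) (φ k))) ∧
    (blockMat n u x t).PosSemidef ∧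
    (Matrix.trace (Toep n u)).re / n = t := by
  -- a clean formula for u
  have hu' : ∀ j : Fin n, u j = ∑ k, (c k : ℂ) *
      Complex.exp (Complex.I * ((2 * Real.pi * f k * (j : ℝ) : ℝ) : ℂ)) := by
    intro j
    rw [hu]
    simp only [Finset.sum_apply, Pi.smul_apply, smul_eq_mul, atom_eq]
    exact Finset.sum_congr rfl fun k _ => by norm_num
  -- Toeplitz entries
  have hT : ∀ j k : Fin n, Toep n u j k = ∑ k', (c k' : ℂ) *
      Complex.exp (Complex.I * ((2 * Real.pi * f k' * ((j : ℝ) - (k : ℝ)) : ℝ) : ℂ)) := by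
    intro j k
    unfold Toep
    split_ifs with h
    · rw [hu']
      refine Finset.sum_congr rfl fun k' _ => ?_
      congr 3
      push_cast [Nat.cast_sub h]
      ring
    · rw [hu', star_sum]
      refine Finset.sum_congr rfl fun k' _ => ?_
      rw [star_mul', Complex.star_def, Complex.conj_ofReal, ← Complex.exp_conj, _root_.map_mul,
        Complex.conj_I, Complex.conj_ofReal]
      congr 2
      have hle : (j : ℕ) ≤ (k : ℕ) := le_of_not_ge h
      push_cast [Nat.cast_sub hle]
      ring
  have part1 : Toep n u = ∑ k, (c k : ℂ) •
      Matrix.vecMulVec (atom n (f k) (φ k)) (star (atom n (f k) (φ k))) := by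
    funext j k
    rw [hT]
    simp only [Matrix.sum_apply, Matrix.smul_apply, Matrix.vecMulVec_apply, Pi.star_apply,
      smul_eq_mul]
    exact Finset.sum_congr rfl fun k' _ => by rw [atom_mul_star]
  refine ⟨part1, ?_, ?_⟩
  · -- PSD
    set w : Fin s → (Fin n ⊕ Fin 1) → ℂ := fun k => Sum.elim (atom n (f k) (φ k)) 1 with hw
    have hB : blockMat n u x t = ∑ k, (c k : ℂ) • vecMulVec (w k) (star (w k)) := by
      funext a b
      cases a with
      | inl j =>
        cases b with
        | inl k =>
          have := congrFun (congrFun part1 j) k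
          simpa [blockMat, Matrix.fromBlocks, Matrix.sum_apply, hw, Matrix.vecMulVec_apply] using this
        | inr k =>
          simp only [blockMat, Matrix.fromBlocks, Matrix.of_apply, Sum.elim_inl, Sum.elim_inr,
            Matrix.sum_apply, Matrix.smul_apply, Matrix.vecMulVec_apply, Pi.star_apply, hw,
            smul_eq_mul, hx, Finset.sum_apply, Pi.smul_apply]
          simp
      | inr j =>
        cases b with
        | inl k =>
          simp only [blockMat, Matrix.fromBlocks, Matrix.of_apply, Sum.elim_inl, Sum.elim_inr,
            Matrix.sum_apply, Matrix.smul_apply, Matrix.vecMulVec_apply, Pi.star_apply, hw,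
            smul_eq_mul, hx, Finset.sum_apply, Pi.smul_apply]
          simp [mul_comm]
        | inr k =>
          simp only [blockMat, Matrix.fromBlocks, Matrix.of_apply, Sum.elim_inr,
            Matrix.sum_apply, Matrix.smul_apply, Matrix.vecMulVec_apply, Pi.star_apply, hw,
            smul_eq_mul, ht]
          push_cast
          simp
    rw [hB]
    exact Finset.sum_induction _ Matrix.PosSemidef (fun a b ha hb => ha.add hb)
      Matrix.PosSemidef.zero (fun k _ => psd_smul (psd_vmv (w k)) (hc k).le)
  · -- trace
    have hd : ∀ j : Fin n, Toep n u j j = (t : ℂ) := by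
      intro j
      rw [hT, ht]
      push_cast
      simp
    rw [Matrix.trace]
    simp only [Matrix.diag_apply, hd]
    simp only [Finset.sum_const, Finset.card_univ, Fintype.card_fin, nsmul_eq_mul]
    rw [show ((n : ℂ) * (t : ℂ)) = (((n : ℝ) * t : ℝ) : ℂ) by push_cast; ring, Complex.ofReal_re]
    field_simp
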